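/- (Second hyperbolic umbilic magnification relation) Let c_1, c_2, c_3, s_1, s_2 ∈ C be such that φ(y) = -20y^6 - 16c_1 y^5 - 12c_2 y^4 - 8c_3 y^3 - 4s_2 y^2 - s_1^2 has six distinct nonzero roots y_1,...,y_6, with J(y_i) = 4s_2 + 12c_3 y_i + 24c_2 y_i^2 + 40c_1 y_i^3 + 60y_i^4 ≠ 0 for each i. Then Σ_{i=1}^6 1/J(y_i) = 0. -/

import Mathlib

open Polynomial Lagrange Finset

/-- The Lagrange identity: for 6 distinct nodes, the sum of `y i / ∏_{j≠i} (y i - y j)`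
vanishes (it is the degree-5 coefficient of interpolating the polynomial `X`). -/
lemma lagrange_power_sum_aux (y : Fin 6 → ℂ) (hinj : Function.Injective y) :
    ∑ i, y i * ((Finset.univ.erase i).prod (fun j => y i - y j))⁻¹ = 0 := by
  classical
  have hvs : Set.InjOn y (Finset.univ : Finset (Fin 6)) := hinj.injOn
  have hX : (X : ℂ[X]) = interpolate Finset.univ y y := by
    refine eq_interpolate_of_eval_eq y hvs ?_ (fun i _ => eval_X)
    · rw [degree_X]
      simp
  have hcoeff := congrArg (fun p : ℂ[X] => p.coeff 5) hX
  simp only [coeff_X, interpolate_apply, finset_sum_coeff] at hcoeff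
  have hbasis : ∀ i : Fin 6, (C (y i) * Lagrange.basis Finset.univ y i).coeff 5
      = y i * ((Finset.univ.erase i).prod (fun j => y i - y j))⁻¹ := by
    intro i
    rw [coeff_C_mul]
    congr 1
    rw [basis_eq_prod_sub_inv_mul_nodal_div (Finset.mem_univ i),
      ← nodal_erase_eq_nodal_div (Finset.mem_univ i), coeff_C_mul]
    have hmon : (nodal ((Finset.univ : Finset (Fin 6)).erase i) y).Monic := nodal_monic
    have hdeg : (nodal ((Finset.univ : Finset (Fin 6)).erase i) y).natDegree = 5 := by
      rw [natDegree_nodal, Finset.card_erase_of_mem (Finset.mem_univ i)]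
      simp
    have h5 : (nodal ((Finset.univ : Finset (Fin 6)).erase i) y).coeff 5 = 1 := by
      rw [← hdeg]; exact hmon.coeff_natDegree
    rw [h5, mul_one, nodalWeight_eq_eval_nodal_erase_inv, eval_nodal]
  rw [Finset.sum_congr rfl (fun i _ => hbasis i)] at hcoeff
  exact hcoeff.symm

theorem second_hyperbolic_umbilic_magnification_relation (c₁ c₂ c₃ s₁ s₂ : ℂ)
    (y : Fin 6 → ℂ) (hinj : Function.Injective y) (hne : ∀ i, y i ≠ 0)
    (hroot : ∀ i, -20 * (y i) ^ 6 - 16 * c₁ * (y i) ^ 5 - 12 * c₂ * (y i) ^ 4 -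
      8 * c₃ * (y i) ^ 3 - 4 * s₂ * (y i) ^ 2 - s₁ ^ 2 = 0)
    (hJ : ∀ i, 4 * s₂ + 12 * c₃ * y i + 24 * c₂ * (y i) ^ 2 +
      40 * c₁ * (y i) ^ 3 + 60 * (y i) ^ 4 ≠ 0) :
    ∑ i, 1 / (4 * s₂ + 12 * c₃ * y i + 24 * c₂ * (y i) ^ 2 +
      40 * c₁ * (y i) ^ 3 + 60 * (y i) ^ 4) = 0 := by
  classical
  set J : Fin 6 → ℂ := fun i => 4 * s₂ + 12 * c₃ * y i + 24 * c₂ * (y i) ^ 2 +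
      40 * c₁ * (y i) ^ 3 + 60 * (y i) ^ 4 with hJdef
  set P : Fin 6 → ℂ := fun i => (Finset.univ.erase i).prod (fun j => y i - y j) with hPdef
  -- the polynomial φ
  set p : ℂ[X] := C (-20) * X ^ 6 + C (-16 * c₁) * X ^ 5 + C (-12 * c₂) * X ^ 4 +
      C (-8 * c₃) * X ^ 3 + C (-4 * s₂) * X ^ 2 + C (-(s₁ ^ 2)) with hpdef
  set g : ℂ[X] := C (-20) * nodal Finset.univ y with hgdef
  have hs : (Finset.univ.image y).card = 6 := by
    rw [Finset.card_image_of_injective _ hinj, Finset.card_univ, Fintype.card_fin]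
  have hpdeg : p.degree = 6 := by
    rw [hpdef]; compute_degree!
  have hplc : p.leadingCoeff = -20 := by
    have hnat : p.natDegree = 6 := natDegree_eq_of_degree_eq_some hpdeg
    rw [leadingCoeff, hnat, hpdef]
    simp only [coeff_add, coeff_C_mul, coeff_X_pow, coeff_C]
    norm_num
  have hgdeg : g.degree = 6 := by
    rw [hgdef, degree_mul, degree_C (by norm_num : (-20 : ℂ) ≠ 0), degree_nodal]
    simp
  have hglc : g.leadingCoeff = -20 := by
    rw [hgdef, leadingCoeff_mul, leadingCoeff_C, nodal_monic.leadingCoeff, mul_one]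
  have hpg : p = g := by
    refine Polynomial.eq_of_degree_le_of_eval_finset_eq (Finset.univ.image y) ?_
      (by rw [hpdeg, hgdeg]) (by rw [hplc, hglc]) ?_
    · rw [hpdeg, hs]; norm_num
    · intro x hx
      obtain ⟨i, _, rfl⟩ := Finset.mem_image.mp hx
      have h1 : p.eval (y i) = 0 := by
        have := hroot i
        rw [hpdef]; simp only [eval_add, eval_mul, eval_pow, eval_C, eval_X]
        linear_combination this
      have h2 : g.eval (y i) = 0 := by
        rw [hgdef, eval_mul, eval_nodal_at_node (Finset.mem_univ i), mul_zero]
      rw [h1, h2]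
  -- derivative evaluated at the nodes
  have hderiv : ∀ i, -2 * y i * J i = -20 * P i := by
    intro i
    have h1 : (derivative p).eval (y i) = -2 * y i * J i := by
      rw [hpdef]
      simp only [derivative_add, derivative_mul, derivative_C, derivative_X_pow, derivative_pow,
        zero_mul, zero_add, eval_add, eval_mul, eval_pow, eval_C, eval_X, eval_natCast,
        derivative_X, eval_one, mul_one, derivative_zero, eval_zero]
      push_cast
      ring
    have h2 : (derivative g).eval (y i) = -20 * P i := by
      rw [hgdef, derivative_mul, derivative_C, zero_mul, zero_add, eval_mul, eval_C,
        eval_nodal_derivative_eval_node_eq (Finset.mem_univ i), eval_nodal, hPdef]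
    rw [← h1, ← h2, hpg]
  have hPne : ∀ i, P i ≠ 0 := by
    intro i hP0
    have := hderiv i
    rw [hP0, mul_zero, mul_assoc] at this
    rcases mul_eq_zero.mp this with h | h
    · norm_num at h
    · exact (mul_ne_zero (hne i) (hJ i)) h
  have hinv : ∀ i, 1 / J i = (1/10) * (y i * (P i)⁻¹) := by
    intro i
    have key : y i * J i = 10 * P i := by linear_combination (-(1:ℂ)/2) * hderiv i
    simp only [hJdef] at key ⊢
    have hP : P i = y i * (4 * s₂ + 12 * c₃ * y i + 24 * c₂ * (y i) ^ 2 +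
        40 * c₁ * (y i) ^ 3 + 60 * (y i) ^ 4) / 10 := by linear_combination (-(1:ℂ)/10) * key
    rw [hP]
    field_simp [hne i, hJ i]
  calc ∑ i, 1 / J i = ∑ i, (1/10 : ℂ) * (y i * (P i)⁻¹) :=
        Finset.sum_congr rfl (fun i _ => hinv i)
    _ = (1/10 : ℂ) * ∑ i, y i * (P i)⁻¹ := by rw [Finset.mul_sum]
    _ = 0 := by rw [lagrange_power_sum_aux y hinj, mul_zero]
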